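/- Let n ≥ 1 and let a_1, ..., a_n be complex numbers. Then (-1)^n/n! · H_n(a_1, ..., a_n) equals the determinant of the n×n upper Hessenberg matrix M whose entries (with rows and columns indexed 1, ..., n) are M_{i,j} = a_i^{j-i+1}/(j-i+1)! whenever j ≥ i-1 (so in particular the subdiagonal entries M_{i,i-1} = 1 and the first row is a_1^j/j!), and M_{i,j} = 0 whenever j < i-1. -/

import Mathlib

open Polynomial

set_option maxRecDepth 8000

/-- The Levinson polynomials `H_n`, defined by `H_0 = 1` and, for `n ≥ 1`,
`H_n(a_1, ..., a_n) = -n! · Σ_{k=1}^{n} (a_1^k / k!) · H_{n-k}(a_{k+1}, ..., a_n) / (n-k)!`. -/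
noncomputable def Hlev : (n : ℕ) → (Fin n → ℂ) → ℂ
  | 0, _ => 1
  | n + 1, a =>
      -((n + 1).factorial : ℂ) * ∑ k ∈ Finset.range (n + 1),
        (a 0 ^ (k + 1) / ((k + 1).factorial : ℂ)) *
          Hlev (n - k) (fun i => a ⟨k + 1 + i.1, by have := i.isLt; omega⟩) /
            ((n - k).factorial : ℂ)
  termination_by n _ => n
  decreasing_by omega

noncomputable def Mmat (n : ℕ) (a : Fin n → ℂ) : Matrix (Fin n) (Fin n) ℂ :=
  Matrix.of fun i j =>
    if (i : ℕ) ≤ (j : ℕ) + 1 then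
      a i ^ ((j : ℕ) + 1 - (i : ℕ)) / ((((j : ℕ) + 1 - (i : ℕ)).factorial : ℂ))
    else 0

lemma Mmat_apply (n : ℕ) (a : Fin n → ℂ) (i j : Fin n) :
    Mmat n a i j = (if (i : ℕ) ≤ (j : ℕ) + 1 then
      a i ^ ((j : ℕ) + 1 - (i : ℕ)) / ((((j : ℕ) + 1 - (i : ℕ)).factorial : ℂ))
    else 0) := rfl

lemma minor_det (m : ℕ) (a : Fin (m+1) → ℂ) (j : Fin (m+1)) :
    ((Mmat (m+1) a).submatrix Fin.succ j.succAbove).det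
      = (Mmat (m - (j:ℕ)) (fun i => a ⟨(j:ℕ) + 1 + i.1, by have := i.isLt; omega⟩)).det := by
  have hj : (j:ℕ) ≤ m := Nat.lt_succ_iff.mp j.isLt
  have hsum : (j:ℕ) + (m - (j:ℕ)) = m := by omega
  set e : Fin (j:ℕ) ⊕ Fin (m - (j:ℕ)) ≃ Fin m := finSumFinEquiv.trans (finCongr hsum) with he
  rw [← Matrix.det_submatrix_equiv_self e]
  set P := (((Mmat (m+1) a).submatrix Fin.succ j.succAbove).submatrix e e) with hP
  have hinl : ∀ r : Fin (j:ℕ), ((e (Sum.inl r)) : ℕ) = (r:ℕ) := by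
    intro r; simp [he]
  have hinr : ∀ r : Fin (m - (j:ℕ)), ((e (Sum.inr r)) : ℕ) = (j:ℕ) + r := by
    intro r; simp [he]
  have hsuccAb : ∀ c : Fin m, ((j.succAbove c) : ℕ) = if (c:ℕ) < (j:ℕ) then (c:ℕ) else (c:ℕ)+1 := by
    intro c
    rcases lt_or_ge (c:ℕ) (j:ℕ) with h | h
    · rw [Fin.succAbove_of_castSucc_lt _ _ (by rwa [Fin.lt_def])]
      simp [h]
    · rw [Fin.succAbove_of_le_castSucc _ _ (by rw [Fin.le_def]; simpa using h)]
      simp [Nat.not_lt.mpr h]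
  -- Fin-level identities
  have hrow2 : ∀ r : Fin (m - (j:ℕ)), Fin.succ (e (Sum.inr r)) = (⟨(j:ℕ)+1+r.1, by have := r.isLt; omega⟩ : Fin (m+1)) := by
    intro r; apply Fin.ext; simp [hinr r]; omega
  have hcol2 : ∀ c : Fin (m - (j:ℕ)), j.succAbove (e (Sum.inr c)) = (⟨(j:ℕ)+1+c.1, by have := c.isLt; omega⟩ : Fin (m+1)) := by
    intro c; apply Fin.ext; rw [hsuccAb]; simp [hinr c]; omega
  have hrow1 : ∀ r : Fin (j:ℕ), Fin.succ (e (Sum.inl r)) = (⟨r.1+1, by have := r.isLt; omega⟩ : Fin (m+1)) := by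
    intro r; apply Fin.ext; simp [hinl r]
  have hcol1 : ∀ c : Fin (j:ℕ), j.succAbove (e (Sum.inl c)) = (⟨c.1, by have := c.isLt; omega⟩ : Fin (m+1)) := by
    intro c; apply Fin.ext; rw [hsuccAb]; simp [hinl c, c.isLt]
  have h21 : P.toBlocks₂₁ = 0 := by
    ext r c
    simp only [Matrix.toBlocks₂₁, Matrix.of_apply, hP, Matrix.submatrix_apply, hrow2 r, hcol1 c,
      Mmat, Matrix.zero_apply]
    rw [if_neg]
    have := c.isLt
    omega
  have hdet : P.det = P.toBlocks₁₁.det * P.toBlocks₂₂.det := by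
    conv_lhs => rw [← Matrix.fromBlocks_toBlocks P, h21]
    exact Matrix.det_fromBlocks_zero₂₁ _ _ _
  rw [hdet]
  have h11 : P.toBlocks₁₁.det = 1 := by
    rw [Matrix.det_of_upperTriangular]
    · apply Finset.prod_eq_one
      intro r _
      simp only [Matrix.toBlocks₁₁, Matrix.of_apply, hP, Matrix.submatrix_apply]
      rw [hrow1 r, hcol1 r, Mmat_apply]
      rw [if_pos (by simp only [Fin.val_mk]; omega)]
      simp
    · intro r c hrc
      simp only [Matrix.toBlocks₁₁, Matrix.of_apply, hP, Matrix.submatrix_apply]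
      rw [hrow1 r, hcol1 c, Mmat_apply]
      have hv : (c:ℕ) < (r:ℕ) := hrc
      rw [if_neg (by simp only [Fin.val_mk]; omega)]
  have h22 : P.toBlocks₂₂ = Mmat (m - (j:ℕ)) (fun i => a ⟨(j:ℕ) + 1 + i.1, by have := i.isLt; omega⟩) := by
    ext r c
    simp only [Matrix.toBlocks₂₂, Matrix.of_apply, hP, Matrix.submatrix_apply]
    rw [hrow2 r, hcol2 c, Mmat_apply, Mmat_apply]
    simp only [Fin.val_mk]
    by_cases h : r.1 ≤ c.1 + 1
    · rw [if_pos (by omega), if_pos (by omega)]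
      have hexp : (j:ℕ)+1+c.1+1 - ((j:ℕ)+1+r.1) = c.1+1-r.1 := by omega
      rw [hexp]
    · rw [if_neg (by omega), if_neg (by omega)]
  rw [h11, h22, one_mul]

lemma key : ∀ n (a : Fin n → ℂ), (-1:ℂ)^n / (n.factorial : ℂ) * Hlev n a = (Mmat n a).det := by
  intro n
  induction n using Nat.strong_induction_on with
  | _ n IH =>
    match n with
    | 0 => intro a; simp [Hlev, Matrix.det_fin_zero]
    | m+1 =>
      intro a
      rw [Matrix.det_succ_row_zero]
      set g : ℕ → ℂ := fun k => (-1:ℂ)^k * (a 0 ^ (k+1) / ((k+1).factorial : ℂ)) *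
              ((-1:ℂ)^(m-k) / ((m-k).factorial : ℂ) *
                Hlev (m-k) (fun i => a ⟨k + 1 + i.1, by have := i.isLt; omega⟩)) with hg
      have hterm : ∀ jj : Fin (m+1),
          (-1:ℂ)^(jj:ℕ) * Mmat (m+1) a 0 jj * ((Mmat (m+1) a).submatrix Fin.succ jj.succAbove).det
          = g (jj:ℕ) := by
        intro jj
        rw [minor_det, ← IH (m - (jj:ℕ)) (by omega)]
        rw [Mmat_apply, hg]
        norm_num
      rw [Finset.sum_congr rfl (fun jj _ => hterm jj), Fin.sum_univ_eq_sum_range g (m+1)]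
      simp only [hg]
      rw [Hlev]
      rw [Finset.mul_sum, Finset.mul_sum]
      refine Finset.sum_congr rfl fun k hk => ?_
      have hk' : k ≤ m := by simpa [Nat.lt_succ_iff] using hk
      have hsgn : (-1:ℂ)^(m+1) = (-1:ℂ)^k * (-1:ℂ)^(m-k) * (-1) := by
        rw [← pow_add, ← pow_succ]
        congr 1
        omega
      have hfac : ((m+1).factorial : ℂ) ≠ 0 := Nat.cast_ne_zero.mpr (Nat.factorial_ne_zero _)
      rw [hsgn]
      field_simp

theorem stmt0 (n : ℕ) (hn : 1 ≤ n) (a : Fin n → ℂ) :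
    (-1 : ℂ) ^ n / (n.factorial : ℂ) * Hlev n a =
      Matrix.det (Matrix.of fun i j : Fin n =>
        if (i : ℕ) ≤ (j : ℕ) + 1 then
          a i ^ ((j : ℕ) + 1 - (i : ℕ)) / ((((j : ℕ) + 1 - (i : ℕ)).factorial : ℂ))
        else 0) := key n a
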